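/- Let p be an odd prime. There is no left brace B whose additive group is isomorphic to Z/(p) × Z/(p²) and whose socle is trivial, i.e. Soc(B) = {0}. -/

import Mathlib

set_option linter.unusedSectionVars false
set_option maxHeartbeats 1000000

/-- A left brace: an abelian group `(B,+)` and a group `(B,·)` such that
`a·(b+c)+a = a·b+a·c` for all `a b c`. -/
class LeftBrace (B : Type*) extends AddCommGroup B, Group B where
  left_brace : ∀ a b c : B, a * (b + c) + a = a * b + a * c

namespace LeftBraceAux

lemma end_sum_apply {M : Type*} [AddCommMonoid M] (s : Finset ℕ)
    (f : ℕ → AddMonoid.End M) (x : M) : (∑ i ∈ s, f i) x = ∑ i ∈ s, f i x :=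
  map_sum (AddMonoidHom.eval x) f s

lemma end_mul_apply {M : Type*} [AddCommMonoid M] (f g : AddMonoid.End M) (x : M) :
    (f * g) x = f (g x) := rfl

lemma end_add_apply {M : Type*} [AddCommMonoid M] (f g : AddMonoid.End M) (x : M) :
    (f + g) x = f x + g x := rfl

lemma end_pow_succ_apply {M : Type*} [AddCommMonoid M] (f : AddMonoid.End M) (k : ℕ)
    (x : M) : (f^(k+1)) x = f ((f^k) x) := by
  rw [pow_succ', end_mul_apply]

variable {B : Type*} [LeftBrace B]


lemma brace_mul_add (a b c : B) : a * (b + c) = a * b + a * c - a := by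
  have h := LeftBrace.left_brace a b c
  linear_combination (norm := abel) h

lemma brace_mul_zero (a : B) : a * 0 = a := by
  have h := LeftBrace.left_brace a 0 0
  rw [add_zero] at h
  exact (add_left_cancel h).symm

lemma one_eq_zero : (1 : B) = 0 := by
  have h := brace_mul_zero (1 : B)
  rw [one_mul] at h
  exact h.symm

/-- the lambda map of a brace, as an additive endomorphism -/
def lam (a : B) : AddMonoid.End B :=
  AddMonoidHom.mk' (fun b => a * b - a) (by
    intro b c
    show a * (b + c) - a = (a * b - a) + (a * c - a)
    rw [brace_mul_add]
    abel)

lemma lam_apply (a b : B) : lam a b = a * b - a := rfl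

lemma lam_one : lam (1 : B) = 1 := by
  refine AddMonoid.End.ext _ fun b => ?_
  rw [lam_apply, one_mul, one_eq_zero, sub_zero]
  rfl

lemma lam_mul (a b : B) : lam (a * b) = lam a * lam b := by
  refine AddMonoidHom.ext fun c => ?_
  have key : a * ((b * c - b) + b) = a * (b * c - b) + a * b - a := brace_mul_add ..
  rw [sub_add_cancel] at key
  show (a * b) * c - a * b = a * (b * c - b) - a
  rw [mul_assoc, key]
  abel

/-- lambda as a monoid hom -/
def lamHom : B →* AddMonoid.End B where
  toFun := lam
  map_one' := lam_one
  map_mul' := lam_mul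

lemma mul_eq_add_lam (a b : B) : a * b = a + lam a b := by
  rw [lam_apply]; abel

lemma pow_eq_sum (a : B) (n : ℕ) :
    a ^ n = (∑ i ∈ Finset.range n, (lam a) ^ i) a := by
  induction n with
  | zero => simp [one_eq_zero]
  | succ n ih =>
    rw [pow_succ', mul_eq_add_lam, ih, Finset.sum_range_succ', end_add_apply,
      end_sum_apply, end_sum_apply, map_sum]
    simp only [pow_succ', end_mul_apply, pow_zero]
    rw [AddMonoid.End.one_apply]
    abel


section ZModFacts

variable {p : ℕ} [hp : Fact p.Prime]


lemma pdvd : p ∣ p^2 := dvd_pow_self p two_ne_zero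

lemma psq_smul (y : ZMod (p^2)) : (p^2) • y = 0 := by
  haveI : NeZero (p^2) := ⟨pow_ne_zero 2 hp.out.pos.ne'⟩
  rw [nsmul_eq_mul, Nat.cast_pow]
  norm_num [show ((p:ZMod (p^2)))^2 = ((p^2 : ℕ) : ZMod (p^2)) by push_cast; ring,
    ZMod.natCast_self]

lemma psmul_eq_zero_iff (z : ZMod (p^2)) : p • z = 0 ↔ p ∣ z.val := by
  haveI : NeZero (p^2) := ⟨pow_ne_zero 2 hp.out.pos.ne'⟩
  constructor
  · intro h
    have e : (p • z) = ((p * z.val : ℕ) : ZMod (p^2)) := by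
      conv_lhs => rw [← ZMod.natCast_zmod_val z]
      rw [nsmul_eq_mul]; push_cast; ring
    rw [e, ZMod.natCast_eq_zero_iff] at h
    have h' : p^2 ∣ p * z.val := h
    generalize z.val = v at h' ⊢
    rw [pow_two] at h'
    exact (Nat.mul_dvd_mul_iff_left hp.out.pos).mp h'
  · rintro ⟨k, hk⟩
    have hz : z = ((p*k : ℕ) : ZMod (p^2)) := by rw [← hk, ZMod.natCast_zmod_val]
    rw [hz, nsmul_eq_mul, ← Nat.cast_ofNat, ← Nat.cast_mul,
      show p*(p*k) = p^2*k by ring, Nat.cast_mul, ZMod.natCast_self, zero_mul]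

lemma mul_eq_zero_of_dvd (z w : ZMod (p^2)) (hz : p ∣ z.val) (hw : p ∣ w.val) :
    z * w = 0 := by
  haveI : NeZero (p^2) := ⟨pow_ne_zero 2 hp.out.pos.ne'⟩
  obtain ⟨a, ha⟩ := hz
  obtain ⟨b, hb⟩ := hw
  have hz' : z = ((p*a : ℕ) : ZMod (p^2)) := by rw [← ha, ZMod.natCast_zmod_val]
  have hw' : w = ((p*b : ℕ) : ZMod (p^2)) := by rw [← hb, ZMod.natCast_zmod_val]
  rw [hz', hw', ← Nat.cast_mul, show (p*a)*(p*b) = p^2*(a*b) by ring,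
    Nat.cast_mul, ZMod.natCast_self, zero_mul]

lemma nsmul_eq_zero_of_dvd (k : ℕ) (z : ZMod (p^2)) (hk : p ∣ k) (hz : p ∣ z.val) :
    k • z = 0 := by
  haveI : NeZero (p^2) := ⟨pow_ne_zero 2 hp.out.pos.ne'⟩
  rw [nsmul_eq_mul]
  apply mul_eq_zero_of_dvd _ _ _ hz
  rw [ZMod.val_natCast]
  exact (Nat.dvd_mod_iff pdvd).mpr hk

lemma psmul_nsmul_zero (k : ℕ) (z : ZMod (p^2)) (hz : p ∣ z.val) :
    p • (k • z) = 0 := by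
  rw [smul_comm, psmul_eq_zero_iff z |>.mpr hz, smul_zero]

lemma psmul_nsmul_zero' (k : ℕ) (z : ZMod (p^2)) (hk : p ∣ k) :
    p • (k • z) = 0 := by
  obtain ⟨m, rfl⟩ := hk
  rw [← mul_smul, show p * (p*m) = p^2 * m by ring, mul_smul, psq_smul]


noncomputable def pr : ZMod (p^2) →+* ZMod p := ZMod.castHom pdvd (ZMod p)

lemma pr_eq (z : ZMod (p^2)) : pr z = ((z.val : ℕ) : ZMod p) := by
  haveI : NeZero (p^2) := ⟨pow_ne_zero 2 hp.out.pos.ne'⟩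
  rw [pr, ZMod.castHom_apply, ← ZMod.natCast_val]

lemma pr_eq_zero (z : ZMod (p^2)) (h : p ∣ z.val) : pr z = 0 := by
  rw [pr_eq, ZMod.natCast_eq_zero_iff]
  exact h

lemma pr_eq_zero_iff (z : ZMod (p^2)) : pr z = 0 ↔ p ∣ z.val := by
  rw [pr_eq, ZMod.natCast_eq_zero_iff]

lemma val_smul_eq_mul (x y : ZMod p) : x.val • y = x * y := by
  haveI : NeZero p := ⟨hp.out.pos.ne'⟩
  rw [nsmul_eq_mul, ZMod.natCast_zmod_val]

lemma val_smul_eq_mul' (x y : ZMod (p^2)) : x.val • y = x * y := by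
  haveI : NeZero (p^2) := ⟨pow_ne_zero 2 hp.out.pos.ne'⟩
  rw [nsmul_eq_mul, ZMod.natCast_zmod_val]

lemma smul_zmodp_dvd (k : ℕ) (y : ZMod p) (hk : p ∣ k) : k • y = 0 := by
  haveI : NeZero p := ⟨hp.out.pos.ne'⟩
  rw [nsmul_eq_mul, (ZMod.natCast_eq_zero_iff k p).mpr hk, zero_mul]

lemma endo_apply (φ : AddMonoid.End (ZMod p × ZMod (p^2))) (v : ZMod p × ZMod (p^2)) :
    φ v = v.1.val • φ (1, 0) + v.2.val • φ (0, 1) := by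
  haveI : NeZero p := ⟨hp.out.pos.ne'⟩
  haveI : NeZero (p^2) := ⟨pow_ne_zero 2 hp.out.pos.ne'⟩
  have hv : v = v.1.val • ((1 : ZMod p), (0 : ZMod (p^2)))
      + v.2.val • ((0 : ZMod p), (1 : ZMod (p^2))) := by
    ext
    · simp [val_smul_eq_mul]
    · simp [val_smul_eq_mul']
  conv_lhs => rw [hv]
  rw [map_add, map_nsmul, map_nsmul]

/-- structural condition on a p-power-order endomorphism -/
def Good (p : ℕ) (φ : AddMonoid.End (ZMod p × ZMod (p^2))) : Prop :=
  (φ (1, 0)).1 = 1 ∧ p ∣ ((φ (1, 0)).2).val ∧ p ∣ ((φ (0, 1)).2 - 1).val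

lemma zmodp_pow_pcube (x : ZMod p) : x ^ (p^3) = x := by
  rw [show p^3 = p*p*p by ring, pow_mul, pow_mul, ZMod.pow_card, ZMod.pow_card,
    ZMod.pow_card]

lemma good_of_pow (φ : AddMonoid.End (ZMod p × ZMod (p^2)))
    (hφ : φ ^ (p^3) = 1) : Good p φ := by
  haveI : NeZero p := ⟨hp.out.pos.ne'⟩
  haveI : NeZero (p^2) := ⟨pow_ne_zero 2 hp.out.pos.ne'⟩
  set P1 := φ ((1 : ZMod p), (0 : ZMod (p^2))) with hP1
  set P2 := φ ((0 : ZMod p), (1 : ZMod (p^2))) with hP2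
  have hsm : p • ((1 : ZMod p), (0 : ZMod (p^2))) = (0 : ZMod p × ZMod (p^2)) := by
    ext
    · simp [smul_zmodp_dvd]
    · simp
  have hP1p : p • P1 = 0 := by
    rw [hP1, ← map_nsmul, hsm, map_zero]
  have hb : p ∣ P1.2.val := by
    rw [← psmul_eq_zero_iff]
    have := congrArg Prod.snd hP1p
    simpa using this
  -- first iteration
  have key : ∀ k : ℕ, ∃ w : ZMod (p^2),
      (φ^k) ((1 : ZMod p), (0 : ZMod (p^2))) = (P1.1 ^ k, w) ∧ p ∣ w.val := by
    intro k
    induction k with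
    | zero => exact ⟨0, by simp, by simp⟩
    | succ k ih =>
      obtain ⟨w, hw, hwd⟩ := ih
      have hstep : (φ^(k+1)) ((1 : ZMod p), (0 : ZMod (p^2)))
          = (P1.1 ^ k).val • P1 + w.val • P2 := by
        rw [end_pow_succ_apply, hw, endo_apply]
      refine ⟨(P1.1 ^ k).val • P1.2 + w.val • P2.2, ?_, ?_⟩
      · rw [hstep]
        ext
        · show (P1.1^k).val • P1.1 + w.val • P2.1 = P1.1^(k+1)
          rw [val_smul_eq_mul, ← pow_succ, smul_zmodp_dvd _ _ hwd, add_zero]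
        · rfl
      · rw [← psmul_eq_zero_iff, smul_add, psmul_nsmul_zero _ _ hb,
          psmul_nsmul_zero' _ _ hwd, add_zero]
  -- conclude first coordinate
  have hfirst : P1.1 = 1 := by
    obtain ⟨w, hw, -⟩ := key (p^3)
    rw [hφ] at hw
    have h1 : ((1 : AddMonoid.End (ZMod p × ZMod (p^2))))
        ((1 : ZMod p), (0 : ZMod (p^2))) = ((1 : ZMod p), (0 : ZMod (p^2))) := rfl
    rw [h1] at hw
    have := congrArg Prod.fst hw
    simp only at this
    rw [← zmodp_pow_pcube P1.1, ← this]
  -- second iteration: action on (0, p)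
  have key2 : ∀ k : ℕ, (φ^k) ((0 : ZMod p), ((p : ℕ) : ZMod (p^2)))
      = (0, ((p : ℕ) : ZMod (p^2)) * P2.2 ^ k) := by
    intro k
    induction k with
    | zero => simp
    | succ k ih =>
      have hyv : p ∣ (((p : ℕ) : ZMod (p^2)) * P2.2 ^ k).val := by
        rw [← psmul_eq_zero_iff, ← smul_mul_assoc, nsmul_eq_mul, ← Nat.cast_mul,
          ← pow_two, ZMod.natCast_self, zero_mul]
      rw [end_pow_succ_apply, ih, endo_apply]
      ext
      · show (0 : ZMod p).val • P1.1 + (((p:ℕ) : ZMod (p^2)) * P2.2 ^ k).val • P2.1 = 0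
        rw [ZMod.val_zero, zero_smul, smul_zmodp_dvd _ _ hyv, add_zero]
      · show (0 : ZMod p).val • P1.2 + (((p:ℕ) : ZMod (p^2)) * P2.2 ^ k).val • P2.2
            = ((p:ℕ) : ZMod (p^2)) * P2.2 ^ (k+1)
        rw [ZMod.val_zero, zero_smul, val_smul_eq_mul', zero_add, mul_assoc, ← pow_succ]
  -- conclude d ≡ 1 mod p
  have hd : p ∣ (P2.2 - 1).val := by
    have hw := key2 (p^3)
    rw [hφ] at hw
    have h1 : ((1 : AddMonoid.End (ZMod p × ZMod (p^2))))
        ((0 : ZMod p), ((p:ℕ) : ZMod (p^2))) = ((0 : ZMod p), ((p:ℕ) : ZMod (p^2))) := rfl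
    rw [h1] at hw
    have h2 := congrArg Prod.snd hw
    simp only at h2
    -- h2 : (p : ZMod (p^2)) = p * P2.2 ^ (p^3)
    have h3 : ((p:ℕ) : ZMod (p^2)) * (P2.2 ^ (p^3) - 1) = 0 := by
      rw [mul_sub, ← h2, mul_one, sub_self]
    have h4 : p ∣ (P2.2 ^ (p^3) - 1).val := by
      rw [← psmul_eq_zero_iff, nsmul_eq_mul, h3]
    have h5 : pr (P2.2 ^ (p^3)) = 1 := by
      have := pr_eq_zero _ h4
      rw [map_sub, map_one, sub_eq_zero] at this
      exact this
    have h6 : pr P2.2 = 1 := by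
      rw [map_pow] at h5
      rw [← zmodp_pow_pcube (pr P2.2), h5]
    rw [← pr_eq_zero_iff, map_sub, map_one, h6, sub_self]
  exact ⟨hfirst, hb, hd⟩


section GoodLemmas

variable (φ ψ : AddMonoid.End (ZMod p × ZMod (p^2)))

lemma good_pr_d (h : Good p φ) : pr ((φ (0,1)).2) = 1 := by
  have := pr_eq_zero _ h.2.2
  rwa [map_sub, map_one, sub_eq_zero] at this

lemma good_sub_apply (h : Good p φ) (v : ZMod p × ZMod (p^2)) :
    (φ - 1) v = (v.2.val • (φ (0,1)).1,
      v.1.val • (φ (1,0)).2 + v.2.val • ((φ (0,1)).2 - 1)) := by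
  haveI : NeZero p := ⟨hp.out.pos.ne'⟩
  haveI : NeZero (p^2) := ⟨pow_ne_zero 2 hp.out.pos.ne'⟩
  have hsub : (φ - 1) v = φ v - v := rfl
  rw [hsub, endo_apply]
  ext
  · show v.1.val • (φ (1,0)).1 + v.2.val • (φ (0,1)).1 - v.1 = _
    rw [h.1, val_smul_eq_mul, mul_one]
    abel
  · show v.1.val • (φ (1,0)).2 + v.2.val • (φ (0,1)).2 - v.2 = _
    simp only [smul_sub, val_smul_eq_mul', mul_one]
    abel

lemma good_nsq_apply (h : Good p φ) (v : ZMod p × ZMod (p^2)) :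
    ((φ - 1) * (φ - 1)) v
      = (0, ((v.2.val • (φ (0,1)).1).val) • (φ (1,0)).2) := by
  haveI : NeZero p := ⟨hp.out.pos.ne'⟩
  haveI : NeZero (p^2) := ⟨pow_ne_zero 2 hp.out.pos.ne'⟩
  rw [end_mul_apply, good_sub_apply _ h, good_sub_apply _ h]
  have hw2 : p ∣ (v.1.val • (φ (1,0)).2 + v.2.val • ((φ (0,1)).2 - 1)).val := by
    rw [← psmul_eq_zero_iff, smul_add, psmul_nsmul_zero _ _ h.2.1,
      psmul_nsmul_zero _ _ h.2.2, add_zero]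
  ext
  · show (v.1.val • (φ (1,0)).2 + v.2.val • ((φ (0,1)).2 - 1)).val • (φ (0,1)).1 = 0
    exact smul_zmodp_dvd _ _ hw2
  · show (v.2.val • (φ (0,1)).1).val • (φ (1,0)).2
        + (v.1.val • (φ (1,0)).2 + v.2.val • ((φ (0,1)).2 - 1)).val
          • ((φ (0,1)).2 - 1) = _
    rw [nsmul_eq_zero_of_dvd _ _ hw2 h.2.2, add_zero]

lemma good_cube (h : Good p φ) : (φ - 1) * (φ - 1) * (φ - 1) = 0 := by
  haveI : NeZero p := ⟨hp.out.pos.ne'⟩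
  haveI : NeZero (p^2) := ⟨pow_ne_zero 2 hp.out.pos.ne'⟩
  refine AddMonoid.End.ext _ fun v => ?_
  have : ((φ - 1) * (φ - 1) * (φ - 1)) v = ((φ-1) * (φ-1)) ((φ - 1) v) := rfl
  rw [this, good_nsq_apply _ h, good_sub_apply _ h]
  have hv2 : p ∣ (v.1.val • (φ (1,0)).2 + v.2.val • ((φ (0,1)).2 - 1)).val := by
    rw [← psmul_eq_zero_iff, smul_add, psmul_nsmul_zero _ _ h.2.1,
      psmul_nsmul_zero _ _ h.2.2, add_zero]
  have : ((v.1.val • (φ (1,0)).2 + v.2.val • ((φ (0,1)).2 - 1)).val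
      • (φ (0,1)).1) = 0 := smul_zmodp_dvd _ _ hv2
  rw [this]
  show (((0 : ZMod p), ((0:ZMod p).val • (φ (1,0)).2)) : ZMod p × ZMod (p^2)) = 0
  rw [ZMod.val_zero, zero_smul]
  rfl

lemma good_psmul_n (h : Good p φ) : p • (φ - 1) = 0 := by
  haveI : NeZero p := ⟨hp.out.pos.ne'⟩
  haveI : NeZero (p^2) := ⟨pow_ne_zero 2 hp.out.pos.ne'⟩
  refine AddMonoid.End.ext _ fun v => ?_
  have happ : (p • (φ - 1)) v = p • ((φ - 1) v) := rfl
  rw [happ, good_sub_apply _ h]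
  show (p • (v.2.val • (φ (0,1)).1),
      p • (v.1.val • (φ (1,0)).2 + v.2.val • ((φ (0,1)).2 - 1))) = 0
  rw [smul_comm, smul_zmodp_dvd p _ dvd_rfl, smul_zero, smul_add,
    psmul_nsmul_zero _ _ h.2.1, psmul_nsmul_zero _ _ h.2.2, add_zero]
  rfl

lemma good_pow_split (h : Good p φ) (i : ℕ) :
    φ ^ i = 1 + i • (φ - 1) + (i.choose 2) • ((φ - 1) * (φ - 1)) := by
  induction i with
  | zero => simp
  | succ i ih =>
    have hφeq : φ = 1 + (φ - 1) := by abel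
    have h3 := good_cube φ h
    have hps : φ ^ (i+1) = φ ^ i * φ := pow_succ φ i
    have hmul : ∀ X : AddMonoid.End (ZMod p × ZMod (p^2)),
        X * φ = X + X * (φ - 1) := fun X => by
      rw [mul_sub, mul_one]; abel
    have hco : (i+1).choose 2 = i.choose 2 + i := by
      rw [Nat.choose_succ_succ, Nat.choose_one_right]
      exact Nat.add_comm _ _
    rw [hps, ih, hmul, add_mul, add_mul, one_mul, smul_mul_assoc, smul_mul_assoc,
      h3, smul_zero, add_zero, hco, add_nsmul ((φ-1)*(φ-1)) (i.choose 2) i,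
      succ_nsmul (φ-1) i]
    abel

lemma good_choose2_smul (h : Good p φ) (hodd : p ≠ 2) :
    (p.choose 2) • ((φ - 1) * (φ - 1)) = 0 := by
  have hdvd : p ∣ p.choose 2 :=
    hp.out.dvd_choose_self two_ne_zero (lt_of_le_of_ne hp.out.two_le (Ne.symm hodd))
  obtain ⟨m, hm⟩ := hdvd
  rw [hm, mul_comm, mul_smul, ← smul_mul_assoc, good_psmul_n _ h, zero_mul, smul_zero]

lemma good_choose2_smul_n (h : Good p φ) (hodd : p ≠ 2) :
    (p.choose 2) • (φ - 1) = 0 := by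
  have hdvd : p ∣ p.choose 2 :=
    hp.out.dvd_choose_self two_ne_zero (lt_of_le_of_ne hp.out.two_le (Ne.symm hodd))
  obtain ⟨m, hm⟩ := hdvd
  rw [hm, mul_comm, mul_smul, good_psmul_n _ h, smul_zero]

lemma good_pow_p (h : Good p φ) (hodd : p ≠ 2) : φ ^ p = 1 := by
  rw [good_pow_split _ h, good_choose2_smul _ h hodd, add_zero]
  have : p • (φ - 1) = 0 := good_psmul_n _ h
  rw [this, add_zero]

end GoodLemmas

lemma sum_range_id_choose (N : ℕ) : ∑ i ∈ Finset.range N, i = N.choose 2 := by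
  have g := Finset.sum_range_id_mul_two N
  rw [Nat.choose_two_right]
  omega

lemma sum_range_choose_two (N : ℕ) :
    ∑ i ∈ Finset.range N, i.choose 2 = N.choose 3 := by
  induction N with
  | zero => rfl
  | succ N ih => rw [Finset.sum_range_succ, ih, Nat.choose_succ_succ N 2, add_comm]

lemma good_sum (φ : AddMonoid.End (ZMod p × ZMod (p^2))) (h : Good p φ) (hodd : p ≠ 2) :
    ∑ i ∈ Finset.range p, φ ^ i
      = p • (1 : AddMonoid.End (ZMod p × ZMod (p^2)))
        + (p.choose 3) • ((φ - 1) * (φ - 1)) := by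
  have hsplit : ∀ i ∈ Finset.range p, φ ^ i
      = 1 + i • (φ - 1) + (i.choose 2) • ((φ - 1) * (φ - 1)) :=
    fun i _ => good_pow_split _ h i
  rw [Finset.sum_congr rfl hsplit]
  rw [Finset.sum_add_distrib, Finset.sum_add_distrib, Finset.sum_const,
    Finset.card_range, ← Finset.sum_smul, ← Finset.sum_smul, sum_range_id_choose,
    sum_range_choose_two, good_choose2_smul_n _ h hodd, add_zero]


lemma end_ext (φ ψ : AddMonoid.End (ZMod p × ZMod (p^2)))
    (h1 : φ ((1 : ZMod p), (0 : ZMod (p^2))) = ψ ((1 : ZMod p), (0 : ZMod (p^2))))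
    (h2 : φ ((0 : ZMod p), (1 : ZMod (p^2))) = ψ ((0 : ZMod p), (1 : ZMod (p^2)))) :
    φ = ψ :=
  AddMonoid.End.ext _ fun v => by rw [endo_apply φ v, endo_apply ψ v, h1, h2]

lemma good_val_cast_d (φ : AddMonoid.End (ZMod p × ZMod (p^2))) (h : Good p φ) :
    (((φ (0,1)).2.val : ℕ) : ZMod p) = 1 := by
  rw [← pr_eq]
  exact good_pr_d φ h

lemma good_mul_b (φ ψ : AddMonoid.End (ZMod p × ZMod (p^2)))
    (hφ : Good p φ) (hψ : Good p ψ) :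
    ((φ * ψ) ((1 : ZMod p), (0 : ZMod (p^2)))).2
      = (φ ((1 : ZMod p), (0 : ZMod (p^2)))).2 + (ψ ((1 : ZMod p), (0 : ZMod (p^2)))).2 := by
  haveI : NeZero p := ⟨hp.out.pos.ne'⟩
  haveI : NeZero (p^2) := ⟨pow_ne_zero 2 hp.out.pos.ne'⟩
  rw [end_mul_apply, endo_apply]
  have e1 : (ψ ((1:ZMod p), (0:ZMod (p^2)))).1 = 1 := hψ.1
  rw [e1]
  show ((1 : ZMod p)).val • (φ (1,0)).2 + (ψ (1,0)).2.val • (φ (0,1)).2 = _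
  rw [ZMod.val_one, one_smul]
  congr 1
  have hd : (φ (0,1)).2 = ((φ (0,1)).2 - 1) + 1 := by abel
  rw [hd, smul_add, nsmul_eq_zero_of_dvd _ _ hψ.2.1 hφ.2.2, zero_add,
    nsmul_eq_mul, ZMod.natCast_zmod_val, mul_one]

lemma good_mul_c (φ ψ : AddMonoid.End (ZMod p × ZMod (p^2)))
    (hφ : Good p φ) (hψ : Good p ψ) :
    ((φ * ψ) ((0 : ZMod p), (1 : ZMod (p^2)))).1
      = (φ ((0 : ZMod p), (1 : ZMod (p^2)))).1 + (ψ ((0 : ZMod p), (1 : ZMod (p^2)))).1 := by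
  haveI : NeZero p := ⟨hp.out.pos.ne'⟩
  haveI : NeZero (p^2) := ⟨pow_ne_zero 2 hp.out.pos.ne'⟩
  rw [end_mul_apply, endo_apply]
  show (ψ (0,1)).1.val • (φ (1,0)).1 + (ψ (0,1)).2.val • (φ (0,1)).1 = _
  rw [hφ.1, val_smul_eq_mul, mul_one, nsmul_eq_mul, good_val_cast_d ψ hψ, one_mul,
    add_comm]

end ZModFacts


def conjEnd {B A : Type*} [AddCommGroup B] [AddCommGroup A] (e : B ≃+ A) :
    AddMonoid.End B →* AddMonoid.End A where
  toFun f := ((e.toAddMonoidHom.comp f).comp e.symm.toAddMonoidHom : AddMonoid.End A)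
  map_one' := by
    refine AddMonoidHom.ext fun v => ?_
    show e ((1 : AddMonoid.End B) (e.symm v)) = (1 : AddMonoid.End A) v
    rw [AddMonoid.End.one_apply, AddMonoid.End.one_apply, e.apply_symm_apply]
  map_mul' f g := by
    refine AddMonoidHom.ext fun v => ?_
    show e ((f * g) (e.symm v)) = e (f (e.symm (e (g (e.symm v)))))
    rw [e.symm_apply_apply, end_mul_apply]

lemma conjEnd_apply {B A : Type*} [AddCommGroup B] [AddCommGroup A] (e : B ≃+ A)
    (f : AddMonoid.End B) (v : A) : conjEnd e f v = e (f (e.symm v)) := rfl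

lemma conjEnd_inj {B A : Type*} [AddCommGroup B] [AddCommGroup A] (e : B ≃+ A)
    {f g : AddMonoid.End B} (h : conjEnd e f = conjEnd e g) : f = g := by
  refine AddMonoidHom.ext fun b => ?_
  have := DFunLike.congr_fun h (e b)
  rw [conjEnd_apply, conjEnd_apply, e.symm_apply_apply] at this
  exact e.injective this

end LeftBraceAux

namespace LeftBraceAux

def bdiv : ZMod (3^2) → ZMod 3 := fun z => ((z.val / 3 : ℕ) : ZMod 3)

lemma bdiv_add : ∀ z w : ZMod (3^2), 3 ∣ z.val → 3 ∣ w.val →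
    bdiv (z+w) = bdiv z + bdiv w := by decide

lemma bdiv_inj : ∀ z w : ZMod (3^2), 3 ∣ z.val → 3 ∣ w.val →
    bdiv z = bdiv w → z = w := by decide

lemma card_zmod33 : Fintype.card (ZMod 3 × ZMod 3) = 9 := by decide

lemma master3 : ∀ (y b : ZMod (3^2)) (c : ZMod 3), 3 ∣ b.val →
    (3 • y + ((y.val • c).val) • b = 0) → ((y.val : ℕ) : ZMod 3) ≠ 0 →
    c + bdiv b = 0 := by decide

end LeftBraceAux

open LeftBraceAux in
/-- For odd primes `p`, there is no left brace with additive group isomorphic to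
`Z/(p) × Z/(p²)` whose socle `{a | λ_a = id}` is trivial. -/
theorem no_trivial_socle_brace_p_times_p_squared (p : ℕ) (hp : p.Prime) (hodd : p ≠ 2) :
    ∀ (B : Type*) [LeftBrace B], (B ≃+ ZMod p × ZMod (p ^ 2)) →
      ¬({a : B | ∀ b : B, a * b - a = b} = {0}) := by
  classical
  intro B _ e hsoc
  haveI hpf : Fact p.Prime := ⟨hp⟩
  haveI : NeZero p := ⟨hp.pos.ne'⟩
  haveI : NeZero (p^2) := ⟨pow_ne_zero 2 hp.pos.ne'⟩
  letI : Fintype B := Fintype.ofEquiv _ e.symm.toEquiv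
  have hcard : Fintype.card B = p^3 := by
    rw [Fintype.card_congr e.toEquiv, Fintype.card_prod, ZMod.card, ZMod.card]
    ring
  have hsoc' : ∀ x : B, lam x = 1 → x = 0 := by
    intro x hx
    have hmem : x ∈ {a : B | ∀ b : B, a * b - a = b} := by
      intro b
      have h := DFunLike.congr_fun hx b
      rw [lam_apply] at h
      exact h.trans (AddMonoid.End.one_apply b)
    rw [hsoc] at hmem
    exact hmem
  set Φ : B →* AddMonoid.End (ZMod p × ZMod (p^2)) := (conjEnd e).comp lamHom with hΦdef
  have hΦlam : ∀ a : B, Φ a = conjEnd e (lam a) := fun a => rfl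
  have hΦpow3 : ∀ a : B, (Φ a)^(p^3) = 1 := by
    intro a
    rw [← map_pow]
    have h1 : a ^ (p^3) = 1 := by rw [← hcard]; exact pow_card_eq_one
    rw [h1, map_one]
  have hGood : ∀ a : B, Good p (Φ a) := fun a => good_of_pow _ (hΦpow3 a)
  have hap : ∀ a : B, a ^ p = 0 := by
    intro a
    apply hsoc'
    apply conjEnd_inj e
    have h1 : conjEnd e (lam (a^p)) = Φ (a^p) := rfl
    rw [h1, map_pow, good_pow_p _ (hGood a) hodd, map_one]
  have hmaster : ∀ a : B,
      p • (e a) + (p.choose 3) • (((Φ a - 1) * (Φ a - 1)) (e a)) = 0 := by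
    intro a
    have h0 : e ((a : B)^p) = 0 := by rw [hap, map_zero]
    rw [pow_eq_sum] at h0
    have htrans : e ((∑ i ∈ Finset.range p, (lam a)^i) a)
        = (∑ i ∈ Finset.range p, (Φ a)^i) (e a) := by
      calc e ((∑ i ∈ Finset.range p, (lam a)^i) a)
          = e (∑ i ∈ Finset.range p, ((lam a)^i) a) := by rw [end_sum_apply]
        _ = ∑ i ∈ Finset.range p, e (((lam a)^i) a) := map_sum e _ _
        _ = ∑ i ∈ Finset.range p, ((Φ a)^i) (e a) := by
            refine Finset.sum_congr rfl fun i _ => ?_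
            rw [hΦlam, ← map_pow, conjEnd_apply, e.symm_apply_apply]
        _ = (∑ i ∈ Finset.range p, (Φ a)^i) (e a) := (end_sum_apply _ _ _).symm
    rw [htrans, good_sum _ (hGood a) hodd] at h0
    rw [end_add_apply] at h0
    have h1 : (p • (1 : AddMonoid.End (ZMod p × ZMod (p^2)))) (e a) = p • (e a) := rfl
    have h2 : ((p.choose 3) • ((Φ a - 1) * (Φ a - 1))) (e a)
        = (p.choose 3) • (((Φ a - 1) * (Φ a - 1)) (e a)) := rfl
    rw [h1, h2] at h0
    exact h0
  have hnsq : ∀ a : B, (((Φ a - 1) * (Φ a - 1)) (e a)).1 = 0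
      ∧ p ∣ ((((Φ a - 1) * (Φ a - 1)) (e a)).2).val := by
    intro a
    rw [good_nsq_apply _ (hGood a)]
    refine ⟨rfl, ?_⟩
    show p ∣ ((((e a).2.val • ((Φ a) (0,1)).1).val) • ((Φ a) (1,0)).2).val
    rw [← psmul_eq_zero_iff]
    exact psmul_nsmul_zero _ _ (hGood a).2.1
  by_cases hp3 : p = 3
  · subst hp3
    have k1 := bdiv_add
    have k2 := bdiv_inj
    have k3 := master3
    have hch : Nat.choose 3 3 = 1 := rfl
    have hs0 : ∀ a : B, (((e a).2.val : ℕ) : ZMod 3) ≠ 0 →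
        ((Φ a) (0,1)).1 + bdiv (((Φ a) (1,0)).2) = 0 := by
      intro a hy
      have hm := hmaster a
      rw [good_nsq_apply _ (hGood a), hch, one_smul] at hm
      have hm2' : 3 • (e a).2 + (((e a).2.val • ((Φ a) (0,1)).1).val) • ((Φ a) (1,0)).2
          = 0 := congrArg Prod.snd hm
      exact k3 _ _ _ (hGood a).2.1 hm2' hy
    have hbmul : ∀ a a' : B,
        ((Φ (a*a')) (1,0)).2 = ((Φ a) (1,0)).2 + ((Φ a') (1,0)).2 := by
      intro a a'
      rw [map_mul]
      exact good_mul_b _ _ (hGood a) (hGood a')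
    have hcmul : ∀ a a' : B,
        ((Φ (a*a')) (0,1)).1 = ((Φ a) (0,1)).1 + ((Φ a') (0,1)).1 := by
      intro a a'
      rw [map_mul]
      exact good_mul_c _ _ (hGood a) (hGood a')
    let Y : B → ZMod 3 := fun a => pr ((e a).2)
    have hYmul : ∀ a a' : B, Y (a*a') = Y a + Y a' := by
      intro a a'
      have hco : e (a * a') = e a + (Φ a) (e a') := by
        rw [mul_eq_add_lam, map_add]
        congr 1
        rw [hΦlam, conjEnd_apply, e.symm_apply_apply]
      have h2 : (e (a*a')).2 = (e a).2 + ((Φ a) (e a')).2 := by rw [hco]; rfl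
      show pr ((e (a*a')).2) = pr ((e a).2) + pr ((e a').2)
      rw [h2, map_add, endo_apply]
      congr 1
      show pr ((e a').1.val • ((Φ a) (1,0)).2 + (e a').2.val • ((Φ a) (0,1)).2)
        = pr ((e a').2)
      rw [map_add, map_nsmul, map_nsmul, pr_eq_zero _ (hGood a).2.1, smul_zero,
        good_pr_d _ (hGood a), zero_add, nsmul_eq_mul, mul_one, ← pr_eq]
    have hYg : Y (e.symm ((0 : ZMod 3), (1 : ZMod (3^2)))) = 1 := by
      show pr ((e (e.symm (0,1))).2) = 1
      rw [e.apply_symm_apply]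
      exact map_one pr
    have hS0 : ∀ a : B, Y a ≠ 0 → ((Φ a) (0,1)).1 + bdiv (((Φ a) (1,0)).2) = 0 := by
      intro a hy
      refine hs0 a ?_
      rwa [← pr_eq]
    have hSmul : ∀ a a' : B,
        ((Φ (a*a')) (0,1)).1 + bdiv (((Φ (a*a')) (1,0)).2)
          = (((Φ a) (0,1)).1 + bdiv (((Φ a) (1,0)).2))
            + (((Φ a') (0,1)).1 + bdiv (((Φ a') (1,0)).2)) := by
      intro a a'
      rw [hbmul, hcmul, k1 _ _ (hGood a).2.1 (hGood a').2.1]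
      ring
    have hSall : ∀ a : B, ((Φ a) (0,1)).1 + bdiv (((Φ a) (1,0)).2) = 0 := by
      intro a
      by_cases hy : Y a = 0
      · have hg3 : Y (a * e.symm ((0 : ZMod 3), (1 : ZMod (3^2)))) = 1 := by
          rw [hYmul, hy, hYg, zero_add]
        have h2 := hS0 (a * e.symm ((0 : ZMod 3), (1 : ZMod (3^2))))
          (by rw [hg3]; exact one_ne_zero)
        have h3 := hS0 (e.symm ((0 : ZMod 3), (1 : ZMod (3^2))))
          (by rw [hYg]; exact one_ne_zero)
        rw [hSmul, h3, add_zero] at h2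
        exact h2
      · exact hS0 a hy
    have hinj : Function.Injective
        (fun a : B => (bdiv (((Φ a) (1,0)).2), bdiv ((((Φ a) (0,1)).2) - 1))) := by
      intro a a' h
      rw [Prod.mk.injEq] at h
      obtain ⟨h1, h2⟩ := h
      have hbeq : ((Φ a) (1,0)).2 = ((Φ a') (1,0)).2 :=
        k2 _ _ (hGood a).2.1 (hGood a').2.1 h1
      have hdeq : ((Φ a) (0,1)).2 = ((Φ a') (0,1)).2 := by
        have h4 := k2 _ _ (hGood a).2.2 (hGood a').2.2 h2
        exact sub_left_injective h4
      have hceq : ((Φ a) (0,1)).1 = ((Φ a') (0,1)).1 := by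
        have ha := hSall a
        have ha' := hSall a'
        rw [eq_neg_of_add_eq_zero_left ha, eq_neg_of_add_eq_zero_left ha', h1]
      have hΦeq : Φ a = Φ a' := by
        refine end_ext _ _ ?_ ?_
        · exact Prod.ext ((hGood a).1.trans (hGood a').1.symm) hbeq
        · exact Prod.ext hceq hdeq
      have hlam : lam a = lam a' := by
        apply conjEnd_inj e
        rw [← hΦlam, ← hΦlam, hΦeq]
      have hone : lam (a * a'⁻¹) = 1 := by
        rw [lam_mul, hlam, ← lam_mul, mul_inv_cancel, lam_one]
      have h0 : a * a'⁻¹ = 0 := hsoc' _ hone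
      have h1' : a * a'⁻¹ = 1 := h0.trans one_eq_zero.symm
      exact mul_inv_eq_one.mp h1'
    have hle := Fintype.card_le_of_injective _ hinj
    rw [hcard] at hle
    have hc9 : Fintype.card (ZMod 3 × ZMod 3) = 9 := card_zmod33
    rw [hc9] at hle
    norm_num at hle
  · have h3lt : 3 < p := by
      have h2 := hp.two_le
      omega
    have hdvd3 : p ∣ p.choose 3 := hp.dvd_choose_self three_ne_zero h3lt
    have hzero : ∀ a : B, p • (e a) = 0 := by
      intro a
      have hm := hmaster a
      obtain ⟨h1, h2⟩ := hnsq a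
      have hz : (p.choose 3) • (((Φ a - 1) * (Φ a - 1)) (e a)) = 0 := by
        ext
        · show (p.choose 3) • ((((Φ a - 1) * (Φ a - 1)) (e a)).1) = 0
          rw [h1, smul_zero]
        · show (p.choose 3) • ((((Φ a - 1) * (Φ a - 1)) (e a)).2) = 0
          exact nsmul_eq_zero_of_dvd _ _ hdvd3 h2
      rw [hz, add_zero] at hm
      exact hm
    have h1 := hzero (e.symm ((0 : ZMod p), (1 : ZMod (p^2))))
    rw [e.apply_symm_apply] at h1
    have h2 : p • (1 : ZMod (p^2)) = 0 := congrArg Prod.snd h1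
    haveI : Fact (1 < p^2) := ⟨Nat.one_lt_pow two_ne_zero hp.one_lt⟩
    rw [psmul_eq_zero_iff, ZMod.val_one_eq_one_mod] at h2
    rw [Nat.mod_eq_of_lt (Nat.one_lt_pow two_ne_zero hp.one_lt)] at h2
    exact absurd (Nat.dvd_one.mp h2) hp.one_lt.ne'
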